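/- With the setup of the previous statement and additionally Hermitian operators $X_K, X_R, X_{K'}, X_{R'}$ with $Z = V^\dagger(X_{K'}+X_{R'})V - (X_K + X_R)$ and $W_K = \mathrm{tr}_R[(1\otimes\rho_R)Z]$, the commutator expectation identity holds: $\mathrm{tr}[(\rho\otimes\rho_R)[V^\dagger(1\otimes X_{R'})V,\, N]] = \mathrm{tr}[\rho\,[Q, Y_K + W_K]]$ where $Y_K = X_K - \mathcal{L}^\dagger(X_{K'})$ and $N = V^\dagger(P\otimes 1)V - Q\otimes 1$. -/

import Mathlib

open Matrix
open scoped Kronecker ComplexOrder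

variable {n m : Type*} [Fintype n] [DecidableEq n] [Fintype m] [DecidableEq m]

open Classical in
/-- square root of a matrix (zero if not PSD) -/
noncomputable def msqrt (A : Matrix n n ℂ) : Matrix n n ℂ :=
  if h : A.PosSemidef then
    (h.1.eigenvectorUnitary : Matrix n n ℂ) * diagonal (((↑) : ℝ → ℂ) ∘ Real.sqrt ∘ h.1.eigenvalues) *
      (star h.1.eigenvectorUnitary : Matrix n n ℂ)
  else 0

/-- trace norm -/
noncomputable def traceNorm (X : Matrix n m ℂ) : ℝ :=
  ((msqrt (Xᴴ * X)).trace).re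

def IsDensity (ρ : Matrix n n ℂ) : Prop := ρ.PosSemidef ∧ ρ.trace = 1

noncomputable def variance (σ A : Matrix n n ℂ) : ℝ :=
  (Matrix.trace (σ * (A * A))).re - ((Matrix.trace (σ * A)).re) ^ 2

/-- `L` is a symmetric logarithmic derivative for `(σ, W)`. -/
def IsSLD (σ W L : Matrix n n ℂ) : Prop :=
  L.IsHermitian ∧ L * σ + σ * L = ((-2 : ℂ) * Complex.I) • (W * σ - σ * W)

/-- SLD Fisher information value associated with a given SLD `L`. -/
noncomputable def fisherVal (σ L : Matrix n n ℂ) : ℝ :=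
  (Matrix.trace (σ * (L * L))).re

noncomputable def fidelity (ρ σ : Matrix n n ℂ) : ℝ :=
  ((msqrt (msqrt ρ * σ * msqrt ρ)).trace).re

noncomputable def purifiedDist (ρ σ : Matrix n n ℂ) : ℝ :=
  Real.sqrt (1 - fidelity ρ σ ^ 2)

/-- completely positive -/
def IsCompletelyPositive (Φ : Matrix n n ℂ →ₗ[ℂ] Matrix m m ℂ) : Prop :=
  ∀ (k : ℕ) (M : Matrix (Fin k × n) (Fin k × n) ℂ), M.PosSemidef →
    (Matrix.of fun (p q : Fin k × m) => (Φ (Matrix.of fun i j => M (p.1, i) (q.1, j))) p.2 q.2).PosSemidef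

def IsCPTP (Φ : Matrix n n ℂ →ₗ[ℂ] Matrix m m ℂ) : Prop :=
  IsCompletelyPositive Φ ∧ ∀ X, (Φ X).trace = X.trace

/-- partial trace over the second factor -/
noncomputable def ptraceR {k r : Type*} [Fintype k] [Fintype r]
    (M : Matrix (k × r) (k × r) ℂ) : Matrix k k ℂ :=
  Matrix.of fun i j => ∑ a : r, M (i, a) (j, a)


lemma ptraceR_add {k r : Type*} [Fintype k] [Fintype r]
    (M N : Matrix (k × r) (k × r) ℂ) : ptraceR (M + N) = ptraceR M + ptraceR N := by
  ext i j; simp [ptraceR, Finset.sum_add_distrib]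

lemma ptraceR_sub {k r : Type*} [Fintype k] [Fintype r]
    (M N : Matrix (k × r) (k × r) ℂ) : ptraceR (M - N) = ptraceR M - ptraceR N := by
  ext i j; simp [ptraceR, Finset.sum_sub_distrib]

lemma ptraceR_kron {k r : Type*} [Fintype k] [Fintype r]
    (C : Matrix k k ℂ) (D : Matrix r r ℂ) : ptraceR (C ⊗ₖ D) = D.trace • C := by
  ext i j
  simp [ptraceR, Matrix.trace, ← Finset.mul_sum, mul_comm]

lemma trace_kron_ptrace {k r : Type*} [Fintype k] [DecidableEq k] [Fintype r] [DecidableEq r]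
    (C : Matrix k k ℂ) (ρR : Matrix r r ℂ) (A : Matrix (k × r) (k × r) ℂ) :
    Matrix.trace ((C ⊗ₖ ρR) * A) = Matrix.trace (C * ptraceR (((1 : Matrix k k ℂ) ⊗ₖ ρR) * A)) := by
  simp only [Matrix.trace, Matrix.diag_apply, Matrix.mul_apply, ptraceR, Matrix.of_apply,
    Matrix.kroneckerMap_apply, Fintype.sum_prod_type, Matrix.one_apply, ite_mul, one_mul,
    zero_mul, mul_ite, mul_zero, Finset.mul_sum, Finset.sum_mul, Finset.sum_ite_irrel,
    Finset.sum_const_zero, Finset.sum_ite_eq, Finset.mem_univ, if_true]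
  refine Finset.sum_congr rfl fun i _ => ?_
  rw [Finset.sum_comm]
  refine Finset.sum_congr rfl fun j _ => ?_
  refine Finset.sum_congr rfl fun a _ => ?_
  refine Finset.sum_congr rfl fun b _ => ?_
  ring

/-- Commutator expectation identity in the proof of the key lemma. -/
theorem commutator_expectation_identity
    {k r k' r' : Type*} [Fintype k] [DecidableEq k] [Fintype r] [DecidableEq r]
    [Fintype k'] [DecidableEq k'] [Fintype r'] [DecidableEq r']
    (V : Matrix (k' × r') (k × r) ℂ) (hV1 : Vᴴ * V = 1) (hV2 : V * Vᴴ = 1)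
    (Q : Matrix k k ℂ) (hQh : Q.IsHermitian) (hQp : Q * Q = Q)
    (P : Matrix k' k' ℂ)
    (ρ : Matrix k k ℂ) (hρ : IsDensity ρ) (ρR : Matrix r r ℂ) (hρR : IsDensity ρR)
    (XK : Matrix k k ℂ) (hXK : XK.IsHermitian) (XR : Matrix r r ℂ) (hXR : XR.IsHermitian)
    (XK' : Matrix k' k' ℂ) (hXK' : XK'.IsHermitian)
    (XR' : Matrix r' r' ℂ) (hXR' : XR'.IsHermitian)
    (Z : Matrix (k × r) (k × r) ℂ)
    (hZ : Z = Vᴴ * (XK' ⊗ₖ (1 : Matrix r' r' ℂ) + (1 : Matrix k' k' ℂ) ⊗ₖ XR') * V -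
      (XK ⊗ₖ (1 : Matrix r r ℂ) + (1 : Matrix k k ℂ) ⊗ₖ XR)) :
    Matrix.trace ((ρ ⊗ₖ ρR) *
        ((Vᴴ * ((1 : Matrix k' k' ℂ) ⊗ₖ XR') * V) *
          (Vᴴ * (P ⊗ₖ (1 : Matrix r' r' ℂ)) * V - Q ⊗ₖ (1 : Matrix r r ℂ)) -
         (Vᴴ * (P ⊗ₖ (1 : Matrix r' r' ℂ)) * V - Q ⊗ₖ (1 : Matrix r r ℂ)) *
          (Vᴴ * ((1 : Matrix k' k' ℂ) ⊗ₖ XR') * V))) =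
      Matrix.trace (ρ *
        (Q * ((XK - ptraceR (((1 : Matrix k k ℂ) ⊗ₖ ρR) *
                (Vᴴ * (XK' ⊗ₖ (1 : Matrix r' r' ℂ)) * V))) +
              ptraceR (((1 : Matrix k k ℂ) ⊗ₖ ρR) * Z)) -
         ((XK - ptraceR (((1 : Matrix k k ℂ) ⊗ₖ ρR) *
                (Vᴴ * (XK' ⊗ₖ (1 : Matrix r' r' ℂ)) * V))) +
              ptraceR (((1 : Matrix k k ℂ) ⊗ₖ ρR) * Z)) * Q)) := by
  set A := Vᴴ * ((1 : Matrix k' k' ℂ) ⊗ₖ XR') * V with hAdef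
  set M := Vᴴ * (P ⊗ₖ (1 : Matrix r' r' ℂ)) * V with hMdef
  set B := ptraceR (((1 : Matrix k k ℂ) ⊗ₖ ρR) * A) with hBdef
  set T := ptraceR (((1 : Matrix k k ℂ) ⊗ₖ ρR) * (Vᴴ * (XK' ⊗ₖ (1 : Matrix r' r' ℂ)) * V)) with hTdef
  have conj_mul : ∀ X Y : Matrix (k' × r') (k' × r') ℂ,
      (Vᴴ * X * V) * (Vᴴ * Y * V) = Vᴴ * (X * Y) * V := by
    intro X Y
    calc (Vᴴ * X * V) * (Vᴴ * Y * V) = Vᴴ * X * (V * Vᴴ) * Y * V := by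
          simp only [Matrix.mul_assoc]
      _ = Vᴴ * (X * Y) * V := by
          rw [hV2]; simp only [Matrix.mul_assoc, Matrix.one_mul]
  have hcommXY : ((1 : Matrix k' k' ℂ) ⊗ₖ XR') * (P ⊗ₖ (1 : Matrix r' r' ℂ))
      = (P ⊗ₖ (1 : Matrix r' r' ℂ)) * ((1 : Matrix k' k' ℂ) ⊗ₖ XR') := by
    rw [← Matrix.mul_kronecker_mul, ← Matrix.mul_kronecker_mul, one_mul, mul_one, one_mul, mul_one]
  have hcomm : A * M = M * A := by
    rw [hAdef, hMdef, conj_mul, conj_mul, hcommXY]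
  have hL : A * (M - Q ⊗ₖ (1 : Matrix r r ℂ)) - (M - Q ⊗ₖ (1 : Matrix r r ℂ)) * A
      = (Q ⊗ₖ (1 : Matrix r r ℂ)) * A - A * (Q ⊗ₖ (1 : Matrix r r ℂ)) := by
    rw [mul_sub, sub_mul, hcomm]; abel
  -- expand (1⊗ρR)*Z
  have hkron1 : XK ⊗ₖ ρR = ((1 : Matrix k k ℂ) ⊗ₖ ρR) * (XK ⊗ₖ (1 : Matrix r r ℂ)) := by
    rw [← Matrix.mul_kronecker_mul, one_mul, mul_one]
  have hkron2 : (1 : Matrix k k ℂ) ⊗ₖ (ρR * XR)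
      = ((1 : Matrix k k ℂ) ⊗ₖ ρR) * ((1 : Matrix k k ℂ) ⊗ₖ XR) := by
    rw [← Matrix.mul_kronecker_mul, one_mul]
  have hZexp : ((1 : Matrix k k ℂ) ⊗ₖ ρR) * Z
      = ((1 : Matrix k k ℂ) ⊗ₖ ρR) * (Vᴴ * (XK' ⊗ₖ (1 : Matrix r' r' ℂ)) * V)
        + ((1 : Matrix k k ℂ) ⊗ₖ ρR) * A
        - (XK ⊗ₖ ρR + (1 : Matrix k k ℂ) ⊗ₖ (ρR * XR)) := by
    rw [hZ, hkron1, hkron2, hAdef]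
    simp only [Matrix.mul_add, Matrix.add_mul, Matrix.mul_sub, Matrix.sub_mul]
  have hptr : ptraceR (((1 : Matrix k k ℂ) ⊗ₖ ρR) * Z)
      = T + B - (XK + (Matrix.trace (ρR * XR)) • (1 : Matrix k k ℂ)) := by
    rw [hZexp, ptraceR_sub, ptraceR_add, ptraceR_add, ptraceR_kron, ptraceR_kron,
      hρR.2, one_smul, ← hTdef, ← hBdef]
  have hYW : (XK - T) + ptraceR (((1 : Matrix k k ℂ) ⊗ₖ ρR) * Z)
      = B - (Matrix.trace (ρR * XR)) • (1 : Matrix k k ℂ) := by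
    rw [hptr]; abel
  rw [hL, hYW]
  -- RHS commutator with scalar removed
  have hRcomm : Q * (B - (Matrix.trace (ρR * XR)) • (1 : Matrix k k ℂ))
      - (B - (Matrix.trace (ρR * XR)) • (1 : Matrix k k ℂ)) * Q = Q * B - B * Q := by
    simp [mul_sub, sub_mul, Matrix.mul_smul, Matrix.smul_mul]
  rw [hRcomm]
  rw [mul_sub, Matrix.trace_sub, mul_sub, Matrix.trace_sub]
  congr 1
  · rw [← Matrix.mul_assoc, ← Matrix.mul_kronecker_mul, mul_one, trace_kron_ptrace,
      Matrix.mul_assoc, ← hBdef]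
  · rw [show (ρ ⊗ₖ ρR) * (A * (Q ⊗ₖ (1 : Matrix r r ℂ)))
        = ((ρ ⊗ₖ ρR) * A) * (Q ⊗ₖ (1 : Matrix r r ℂ)) from (Matrix.mul_assoc _ _ _).symm,
      Matrix.trace_mul_comm, ← Matrix.mul_assoc (Q ⊗ₖ (1 : Matrix r r ℂ)) (ρ ⊗ₖ ρR) A,
      ← Matrix.mul_kronecker_mul, one_mul, trace_kron_ptrace, ← hBdef,
      Matrix.mul_assoc, Matrix.trace_mul_comm, Matrix.mul_assoc]
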